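/- Let M be a discrete-time Markov process with state space S such that there exists a probability measure π on S satisfying: for every x ∈ S, lim_{n→∞} sup_{m ∈ ℕ} ∫_S d_W(p^n(y,·), π) p^m(x,dy) = 0. Then for every p ≥ 1, every bounded Lipschitz function f : S → ℝ, and every initial distribution μ ∈ P(S), the time averages (1/n) Σ_{k=0}^{n-1} f(M_k) converge to ∫_S f dπ in L^p(Ω, P^μ) as n → ∞. -/

import Mathlib

open MeasureTheory Filter Topology

/-- The `L¹`-Wasserstein (Kantorovich–Rubinstein) distance between two measures:
`d_W(μ,ν) = sup { |∫ f dμ - ∫ f dν| : f 1-Lipschitz }`. -/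
noncomputable def wassDist {S : Type*} [MeasurableSpace S] [PseudoMetricSpace S]
    (μ ν : Measure S) : ℝ :=
  ⨆ f : {g : S → ℝ // LipschitzWith 1 g}, |(∫ y, f.1 y ∂μ) - ∫ y, f.1 y ∂ν|

/-- A (normal, temporally homogeneous) discrete-time Markov process: a family of probability
measures `P x` on a sample space `Ω` depending measurably on the starting point `x`, a process
`M` such that `M 0 = x` holds `P x`-a.s., satisfying the Markov property with respect to the
natural filtration, with temporally homogeneous transition function `(P x).map (M t)`. -/
structure DiscreteMarkovProcess (S : Type*) [MeasurableSpace S]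
    (Ω : Type*) [MeasurableSpace Ω] where
  P : S → Measure Ω
  M : ℕ → Ω → S
  prob : ∀ x, IsProbabilityMeasure (P x)
  measM : ∀ n, Measurable (M n)
  measP : Measurable P
  start : ∀ x, (P x).map (M 0) = Measure.dirac x
  markov : ∀ (x : S) (s t : ℕ) (g : S → ℝ), Measurable g → (∃ C, ∀ z, |g z| ≤ C) →
    (P x)[(fun ω => g (M (s + t) ω)) |
        ⨆ u : {u : ℕ // u ≤ s}, MeasurableSpace.comap (M u.1) inferInstance]
      =ᵐ[P x] fun ω => ∫ y, g y ∂((P (M s ω)).map (M t))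

/-- The transition function `p t x (dy) = P^x (M_t ∈ dy)` of a discrete-time Markov process. -/
noncomputable def DiscreteMarkovProcess.p {S : Type*} [MeasurableSpace S]
    {Ω : Type*} [MeasurableSpace Ω] (X : DiscreteMarkovProcess S Ω) (n : ℕ) (x : S) :
    Measure S := (X.P x).map (X.M n)

section Aux
open ENNReal

lemma integrable_of_bdd {α : Type*} [MeasurableSpace α] {ν : Measure α} [IsFiniteMeasure ν]
    {F : α → ℝ} (hF : AEStronglyMeasurable F ν) {C : ℝ} (hC : ∀ ω, |F ω| ≤ C) :
    Integrable F ν :=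
  Integrable.mono' (integrable_const C) hF (Eventually.of_forall fun ω => by
    simpa [Real.norm_eq_abs] using hC ω)

lemma abs_integral_le' {α : Type*} [MeasurableSpace α] {ν : Measure α}
    {F : α → ℝ} : |∫ ω, F ω ∂ν| ≤ ∫ ω, |F ω| ∂ν := by
  simpa [Real.norm_eq_abs] using norm_integral_le_integral_norm (μ := ν) F

lemma measurable_integral_of_meas {S Ω : Type*} [MeasurableSpace S] [MeasurableSpace Ω]
    {P : S → Measure Ω} (hP : Measurable P)
    (hprob : ∀ x, IsProbabilityMeasure (P x)) {G : Ω → ℝ} (hG : Measurable G)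
    {C : ℝ} (hC : ∀ ω, |G ω| ≤ C) :
    Measurable fun x => ∫ ω, G ω ∂(P x) := by
  have h1 : ∀ x, ∫ ω, G ω ∂(P x)
      = (∫⁻ ω, ENNReal.ofReal (G ω) ∂(P x)).toReal
        - (∫⁻ ω, ENNReal.ofReal (-(G ω)) ∂(P x)).toReal := fun x => by
    haveI := hprob x
    exact integral_eq_lintegral_pos_part_sub_lintegral_neg_part
      (integrable_of_bdd hG.aestronglyMeasurable hC)
  simp_rw [h1]
  exact ((Measure.measurable_lintegral (ENNReal.measurable_ofReal.comp hG)).comp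
      hP).ennreal_toReal.sub
    ((Measure.measurable_lintegral (ENNReal.measurable_ofReal.comp hG.neg)).comp
      hP).ennreal_toReal

lemma isProbabilityMeasure_bind' {S Ω : Type*} [MeasurableSpace S] [MeasurableSpace Ω]
    {μ : Measure S} [IsProbabilityMeasure μ] {P : S → Measure Ω} (hP : Measurable P)
    (hprob : ∀ x, IsProbabilityMeasure (P x)) : IsProbabilityMeasure (μ.bind P) := by
  constructor
  rw [Measure.bind_apply MeasurableSet.univ hP.aemeasurable]
  simp [(hprob _).measure_univ]

lemma integral_bind_of_bdd {S Ω : Type*} [MeasurableSpace S] [MeasurableSpace Ω]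
    {μ : Measure S} [IsProbabilityMeasure μ] {P : S → Measure Ω} (hP : Measurable P)
    (hprob : ∀ x, IsProbabilityMeasure (P x))
    {F : Ω → ℝ} (hF : Measurable F) {C : ℝ} (hC : ∀ ω, |F ω| ≤ C) :
    ∫ ω, F ω ∂(μ.bind P) = ∫ x, ∫ ω, F ω ∂(P x) ∂μ := by
  haveI : IsProbabilityMeasure (μ.bind P) := isProbabilityMeasure_bind' hP hprob
  have hC0 : (0:ℝ) ≤ C := by
    rcases isEmpty_or_nonempty Ω with h | h
    · haveI : Nonempty S := by
        by_contra hS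
        have := (inferInstance : IsProbabilityMeasure μ).measure_univ
        rw [Set.univ_eq_empty_iff.2 (not_nonempty_iff.1 hS)] at this
        simp at this
      obtain ⟨x⟩ := ‹Nonempty S›
      have := (hprob x).measure_univ
      rw [Set.univ_eq_empty_iff.2 h] at this
      simp at this
    · exact le_trans (abs_nonneg _) (hC h.some)
  set Fp : Ω → ℝ≥0∞ := fun ω => ENNReal.ofReal (F ω) with hFp
  set Fm : Ω → ℝ≥0∞ := fun ω => ENNReal.ofReal (-(F ω)) with hFm
  have hFpm : Measurable Fp := ENNReal.measurable_ofReal.comp hF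
  have hFmm : Measurable Fm := ENNReal.measurable_ofReal.comp hF.neg
  have hbd : ∀ (ν : Measure Ω), IsProbabilityMeasure ν → (∀ (G : Ω → ℝ≥0∞),
      (∀ ω, G ω ≤ ENNReal.ofReal C) → ∫⁻ ω, G ω ∂ν ≤ ENNReal.ofReal C) := by
    intro ν hν G hG
    calc ∫⁻ ω, G ω ∂ν ≤ ∫⁻ _, ENNReal.ofReal C ∂ν := lintegral_mono hG
      _ = ENNReal.ofReal C := by simp [hν.measure_univ]
  have hFple : ∀ ω, Fp ω ≤ ENNReal.ofReal C := fun ω =>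
    ENNReal.ofReal_le_ofReal (le_trans (le_abs_self _) (hC ω))
  have hFmle : ∀ ω, Fm ω ≤ ENNReal.ofReal C := fun ω =>
    ENNReal.ofReal_le_ofReal (le_trans (neg_le_abs _) (hC ω))
  have h1 : ∀ x, ∫ ω, F ω ∂(P x)
      = (∫⁻ ω, Fp ω ∂(P x)).toReal - (∫⁻ ω, Fm ω ∂(P x)).toReal := fun x => by
    haveI := hprob x
    exact integral_eq_lintegral_pos_part_sub_lintegral_neg_part
      (integrable_of_bdd hF.aestronglyMeasurable hC)
  have hmp : Measurable fun x => ∫⁻ ω, Fp ω ∂(P x) :=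
    (Measure.measurable_lintegral hFpm).comp hP
  have hmm : Measurable fun x => ∫⁻ ω, Fm ω ∂(P x) :=
    (Measure.measurable_lintegral hFmm).comp hP
  have hlt : ∀ (G : Ω → ℝ≥0∞), (∀ ω, G ω ≤ ENNReal.ofReal C) →
      ∀ x, ∫⁻ ω, G ω ∂(P x) < ⊤ := fun G hG x =>
    lt_of_le_of_lt (hbd _ (hprob x) G hG) ENNReal.ofReal_lt_top
  have hLHS : ∫ ω, F ω ∂(μ.bind P)
      = (∫⁻ x, ∫⁻ ω, Fp ω ∂(P x) ∂μ).toReal - (∫⁻ x, ∫⁻ ω, Fm ω ∂(P x) ∂μ).toReal := by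
    rw [integral_eq_lintegral_pos_part_sub_lintegral_neg_part
      (integrable_of_bdd hF.aestronglyMeasurable hC),
      Measure.lintegral_bind hP.aemeasurable hFpm.aemeasurable, Measure.lintegral_bind hP.aemeasurable hFmm.aemeasurable]
  rw [hLHS]
  simp_rw [h1]
  rw [integral_sub, integral_toReal hmp.aemeasurable
      (Eventually.of_forall (hlt Fp hFple)),
    integral_toReal hmm.aemeasurable (Eventually.of_forall (hlt Fm hFmle))]
  · exact integrable_of_bdd hmp.ennreal_toReal.aestronglyMeasurable (C := C) fun x => by
      rw [abs_of_nonneg ENNReal.toReal_nonneg]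
      exact ENNReal.toReal_le_of_le_ofReal hC0 (hbd _ (hprob x) Fp hFple)
  · exact integrable_of_bdd hmm.ennreal_toReal.aestronglyMeasurable (C := C) fun x => by
      rw [abs_of_nonneg ENNReal.toReal_nonneg]
      exact ENNReal.toReal_le_of_le_ofReal hC0 (hbd _ (hprob x) Fm hFmle)

end Aux

section Wass
variable {S : Type} [MeasurableSpace S] [MetricSpace S] [BorelSpace S]
  (hd : ∀ x y : S, dist x y ≤ 1)
include hd

lemma lip_bdd {φ : S → ℝ} {K : NNReal} (hφ : LipschitzWith K φ) (x₀ : S) :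
    ∀ z, |φ z - φ x₀| ≤ K := fun z => by
  have h := hφ.dist_le_mul z x₀
  rw [Real.dist_eq] at h
  refine h.trans ?_
  calc (K:ℝ) * dist z x₀ ≤ (K:ℝ) * 1 := mul_le_mul_of_nonneg_left (hd z x₀) K.2
    _ = K := mul_one _

lemma lip_integrable {φ : S → ℝ} {K : NNReal} (hφ : LipschitzWith K φ) (x₀ : S)
    (ν : Measure S) [IsProbabilityMeasure ν] : Integrable φ ν :=
  integrable_of_bdd (hφ.continuous.measurable.aestronglyMeasurable)
    (C := |φ x₀| + K) fun z => by
      have := lip_bdd hd hφ x₀ z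
      calc |φ z| ≤ |φ x₀| + |φ z - φ x₀| := by
            have := abs_add_le (φ x₀) (φ z - φ x₀); simpa using this
        _ ≤ |φ x₀| + K := by linarith

lemma abs_integral_sub_le_two {φ : S → ℝ} (hφ : LipschitzWith 1 φ)
    (μ ν : Measure S) [IsProbabilityMeasure μ] [IsProbabilityMeasure ν] [Nonempty S] :
    |(∫ y, φ y ∂μ) - ∫ y, φ y ∂ν| ≤ 2 := by
  obtain ⟨x₀⟩ := ‹Nonempty S›
  have hint : ∀ (ρ : Measure S), IsProbabilityMeasure ρ → Integrable φ ρ := fun ρ hρ =>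
    lip_integrable hd hφ x₀ ρ
  have key : ∀ (ρ : Measure S), IsProbabilityMeasure ρ →
      |(∫ y, φ y ∂ρ) - φ x₀| ≤ 1 := by
    intro ρ hρ
    have h2 : (∫ y, φ y ∂ρ) - φ x₀ = ∫ y, (φ y - φ x₀) ∂ρ := by
      rw [integral_sub (hint ρ hρ) (integrable_const _), integral_const]
      simp [hρ.measure_univ]
    rw [h2]
    calc |∫ y, (φ y - φ x₀) ∂ρ| ≤ ∫ y, |φ y - φ x₀| ∂ρ := abs_integral_le'
      _ ≤ ∫ _, (1:ℝ) ∂ρ := integral_mono ((hint ρ hρ).sub (integrable_const _)).abs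
          (integrable_const _) (fun z => by simpa using lip_bdd hd hφ x₀ z)
      _ = 1 := by simp [hρ.measure_univ]
  have h1 := key μ ‹_›
  have h2 := key ν ‹_›
  calc |(∫ y, φ y ∂μ) - ∫ y, φ y ∂ν|
      ≤ |(∫ y, φ y ∂μ) - φ x₀| + |φ x₀ - ∫ y, φ y ∂ν| := abs_sub_le _ _ _
    _ ≤ 2 := by rw [abs_sub_comm (φ x₀)] ; linarith

lemma wass_bddAbove (μ ν : Measure S) [IsProbabilityMeasure μ] [IsProbabilityMeasure ν]
    [Nonempty S] :
    BddAbove (Set.range fun f : {g : S → ℝ // LipschitzWith 1 g} =>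
      |(∫ y, f.1 y ∂μ) - ∫ y, f.1 y ∂ν|) := by
  refine ⟨2, ?_⟩
  rintro r ⟨f, rfl⟩
  exact abs_integral_sub_le_two hd f.2 μ ν

lemma le_wassDist {φ : S → ℝ} (hφ : LipschitzWith 1 φ)
    (μ ν : Measure S) [IsProbabilityMeasure μ] [IsProbabilityMeasure ν] [Nonempty S] :
    |(∫ y, φ y ∂μ) - ∫ y, φ y ∂ν| ≤ wassDist μ ν :=
  le_ciSup (wass_bddAbove hd μ ν) (⟨φ, hφ⟩ : {g : S → ℝ // LipschitzWith 1 g})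

lemma wassDist_le_two (μ ν : Measure S) [IsProbabilityMeasure μ] [IsProbabilityMeasure ν]
    [Nonempty S] : wassDist μ ν ≤ 2 := by
  haveI : Nonempty {g : S → ℝ // LipschitzWith 1 g} := ⟨⟨fun _ => 0, LipschitzWith.const' 0⟩⟩
  exact ciSup_le fun f => abs_integral_sub_le_two hd f.2 μ ν

lemma wassDist_nonneg (μ ν : Measure S) [IsProbabilityMeasure μ] [IsProbabilityMeasure ν]
    [Nonempty S] : 0 ≤ wassDist μ ν := by
  have := le_wassDist hd (LipschitzWith.const' (0:ℝ)) μ ν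
  simpa using this

lemma abs_integral_sub_le_lip {f : S → ℝ} {K : NNReal} (hf : LipschitzWith K f)
    (μ ν : Measure S) [IsProbabilityMeasure μ] [IsProbabilityMeasure ν] [Nonempty S] :
    |(∫ y, f y ∂μ) - ∫ y, f y ∂ν| ≤ K * wassDist μ ν := by
  obtain ⟨x₀⟩ := ‹Nonempty S›
  rcases eq_or_ne K 0 with hK | hK
  · have hconst : ∀ z, f z = f x₀ := fun z => by
      have h := lip_bdd hd hf x₀ z
      rw [hK] at h
      simp only [NNReal.coe_zero] at h
      have h0 : |f z - f x₀| = 0 := le_antisymm h (abs_nonneg _)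
      have := abs_eq_zero.mp h0; linarith
    have hfc : (fun z : S => f z) = fun _ => f x₀ := funext hconst
    have : ∀ (ρ : Measure S), IsProbabilityMeasure ρ → ∫ y, f y ∂ρ = f x₀ := by
      intro ρ hρ
      rw [show (fun y : S => f y) = fun _ => f x₀ from hfc]
      simp [hρ.measure_univ]
    rw [this μ ‹_›, this ν ‹_›, hK]
    simp [mul_nonneg]
  · set φ : S → ℝ := fun z => (K:ℝ)⁻¹ • f z with hφdef
    have hφ : LipschitzWith 1 φ := by
      have hl := (lipschitzWith_smul (β := ℝ) ((K:ℝ)⁻¹)).comp hf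
      have he : (‖(K:ℝ)⁻¹‖₊ * K) = 1 := by
        ext
        rw [NNReal.coe_mul, NNReal.coe_one, coe_nnnorm, Real.norm_eq_abs,
          abs_of_nonneg (show (0:ℝ) ≤ (K:ℝ)⁻¹ by positivity),
          inv_mul_cancel₀ (NNReal.coe_ne_zero.mpr hK)]
      rw [he] at hl
      exact hl
    have h1 : ∀ (ρ : Measure S), ∫ y, φ y ∂ρ = (K:ℝ)⁻¹ * ∫ y, f y ∂ρ := fun ρ => by
      simp only [hφdef, smul_eq_mul]
      exact integral_const_mul _ _
    have h2 := le_wassDist hd hφ μ ν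
    rw [h1, h1, ← mul_sub, abs_mul, abs_of_nonneg (show (0:ℝ) ≤ (K:ℝ)⁻¹ by positivity)] at h2
    have hK0 : (0:ℝ) < K := lt_of_le_of_ne K.2 (by exact_mod_cast (Ne.symm hK))
    calc |(∫ y, f y ∂μ) - ∫ y, f y ∂ν|
        = (K:ℝ) * ((K:ℝ)⁻¹ * |(∫ y, f y ∂μ) - ∫ y, f y ∂ν|) := by
          field_simp
      _ ≤ (K:ℝ) * wassDist μ ν := mul_le_mul_of_nonneg_left h2 K.2

end Wass
section TestFun
variable {S : Type} [MeasurableSpace S] [MetricSpace S] [BorelSpace S]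

abbrev WIdx : Type := Σ n : ℕ, (Fin (n+1) → ℚ)

instance : Nonempty WIdx := ⟨⟨0, fun _ => 0⟩⟩

noncomputable def testFun (D : ℕ → S) (j : WIdx) (x : S) : ℝ :=
  ⨅ i : Fin (j.1+1), ((j.2 i : ℝ) + dist x (D i.1))

lemma testFun_bddBelow (D : ℕ → S) (j : WIdx) (x : S) :
    BddBelow (Set.range fun i : Fin (j.1+1) => ((j.2 i : ℝ) + dist x (D i.1))) :=
  (Set.finite_range _).bddBelow

lemma lip_testFun (D : ℕ → S) (j : WIdx) : LipschitzWith 1 (testFun D j) := by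
  have key : ∀ x y : S, testFun D j x - testFun D j y ≤ dist x y := by
    intro x y
    rw [sub_le_iff_le_add]
    have h1 : ∀ i : Fin (j.1+1),
        testFun D j x ≤ ((j.2 i : ℝ) + dist y (D i.1)) + dist x y := by
      intro i
      refine le_trans (ciInf_le (testFun_bddBelow D j x) i) ?_
      have := dist_triangle x y (D i.1)
      linarith
    have h2 : testFun D j x - dist x y ≤ testFun D j y :=
      le_ciInf fun i => by have := h1 i; linarith
    linarith
  refine LipschitzWith.of_dist_le_mul fun x y => ?_
  rw [Real.dist_eq]
  simp only [NNReal.coe_one, one_mul]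
  refine abs_sub_le_iff.2 ⟨key x y, ?_⟩
  rw [dist_comm]
  exact key y x

lemma abs_le_iSup_testFun (hd : ∀ x y : S, dist x y ≤ 1) {D : ℕ → S} (hD : DenseRange D)
    {f : S → ℝ} (hf : LipschitzWith 1 f)
    (μ ν : Measure S) [IsProbabilityMeasure μ] [IsProbabilityMeasure ν] :
    |(∫ y, f y ∂μ) - ∫ y, f y ∂ν|
      ≤ ⨆ j : WIdx, |(∫ y, testFun D j y ∂μ) - ∫ y, testFun D j y ∂ν| := by
  haveI : Nonempty S := ⟨D 0⟩
  have hRle : ∀ j : WIdx, |(∫ y, testFun D j y ∂μ) - ∫ y, testFun D j y ∂ν| ≤ 2 :=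
    fun j => abs_integral_sub_le_two hd (lip_testFun D j) μ ν
  have hRbdd : BddAbove (Set.range fun j : WIdx =>
      |(∫ y, testFun D j y ∂μ) - ∫ y, testFun D j y ∂ν|) := by
    refine ⟨2, ?_⟩; rintro r ⟨j, rfl⟩; exact hRle j
  refine le_of_forall_pos_le_add fun ε hε => ?_
  have hch : ∀ i : ℕ, ∃ r : ℚ, f (D i) < (r:ℝ) ∧ (r:ℝ) < f (D i) + ε/3 := fun i =>
    exists_rat_btwn (by linarith)
  choose q hq1 hq2 using hch
  set F : ℕ → S → ℝ := fun n => testFun D ⟨n, fun i => q i.1⟩ with hF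
  set L : S → ℝ := fun x => ⨅ i : ℕ, ((q i : ℝ) + dist x (D i)) with hL
  have hlip' : ∀ x z : S, f x - f z ≤ dist x z := by
    intro x z
    have h := hf.dist_le_mul x z
    rw [Real.dist_eq] at h
    simp only [NNReal.coe_one, one_mul] at h
    exact (abs_le.1 h).2
  have hterm_lb : ∀ (x : S) (i : ℕ), f x ≤ (q i:ℝ) + dist x (D i) := by
    intro x i
    have h1 := hlip' x (D i)
    have h2 := hq1 i
    linarith
  have hbb : ∀ x : S, BddBelow (Set.range fun i : ℕ => (q i:ℝ) + dist x (D i)) := fun x =>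
    ⟨f x, by rintro r ⟨i, rfl⟩; exact hterm_lb x i⟩
  have ha : ∀ n x, f x ≤ F n x := fun n x => le_ciInf fun i => hterm_lb x i.1
  have hc : ∀ x, f x ≤ L x := fun x => le_ciInf (hterm_lb x)
  have hLF : ∀ n x, L x ≤ F n x := fun n x => le_ciInf fun i => ciInf_le (hbb x) i.1
  have hb : ∀ x, L x ≤ f x + ε/3 := by
    intro x
    refine le_of_forall_pos_le_add fun δ hδ => ?_
    obtain ⟨i, hdist⟩ := Metric.denseRange_iff.1 hD x (δ/2) (by linarith)
    have h1 : L x ≤ (q i:ℝ) + dist x (D i) := ciInf_le (hbb x) i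
    have h2 := hq2 i
    have h3 := hlip' (D i) x
    rw [dist_comm (D i) x] at h3
    linarith
  have hanti : ∀ x, Antitone fun n => F n x := by
    intro x m n hmn
    exact le_ciInf fun i => ciInf_le (testFun_bddBelow D ⟨n, fun i => q i.1⟩ x)
      ⟨i.1, lt_of_lt_of_le i.2 (Nat.succ_le_succ hmn)⟩
  have hInfF : ∀ x, ⨅ n : ℕ, F n x = L x := by
    intro x
    refine le_antisymm (le_ciInf fun i => ?_) (le_ciInf fun n => hLF n x)
    have h5 : (⨅ n : ℕ, F n x) ≤ F i x :=
      ciInf_le ⟨f x, by rintro r ⟨n, rfl⟩; exact ha n x⟩ i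
    refine h5.trans ?_
    exact ciInf_le (testFun_bddBelow D ⟨i, fun k => q k.1⟩ x) ⟨i, Nat.lt_succ_self i⟩
  have htendF : ∀ x, Filter.Tendsto (fun n => F n x) Filter.atTop (nhds (L x)) := by
    intro x
    rw [← hInfF x]
    exact tendsto_atTop_ciInf (hanti x) ⟨f x, by rintro r ⟨n, rfl⟩; exact ha n x⟩
  set Cb : ℝ := |f (D 0)| + |(q 0:ℝ)| + 2 with hCb
  have hFub : ∀ n x, F n x ≤ Cb := by
    intro n x
    have h1 : F n x ≤ (q 0:ℝ) + dist x (D 0) :=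
      ciInf_le (testFun_bddBelow D ⟨n, fun k => q k.1⟩ x) ⟨0, Nat.succ_pos n⟩
    have := hd x (D 0)
    have := le_abs_self (q 0 : ℝ)
    have := abs_nonneg (f (D 0))
    linarith
  have hflb : ∀ x : S, -( |f (D 0)| + 1) ≤ f x := by
    intro x
    have h3 := (abs_le.1 (lip_bdd hd hf (D 0) x)).1
    simp only [NNReal.coe_one] at h3
    have := neg_abs_le (f (D 0))
    linarith
  have hFb : ∀ n x, |F n x| ≤ Cb := by
    intro n x
    refine abs_le.2 ⟨?_, hFub n x⟩
    have := hflb x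
    have h := ha n x
    have := abs_nonneg (q 0 : ℝ)
    linarith
  have hLb : ∀ x, |L x| ≤ Cb := by
    intro x
    refine abs_le.2 ⟨?_, (hLF 0 x).trans (hFub 0 x)⟩
    have := hflb x
    have h := hc x
    have := abs_nonneg (q 0 : ℝ)
    linarith
  have hLmeas : Measurable L := by
    refine Measurable.iInf fun i => ?_
    exact (measurable_const.add ((continuous_id.dist continuous_const).measurable))
  have hint : ∀ (ρ : Measure S), IsProbabilityMeasure ρ →
      Filter.Tendsto (fun n => ∫ x, F n x ∂ρ) Filter.atTop (nhds (∫ x, L x ∂ρ)) := by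
    intro ρ hρ
    refine tendsto_integral_of_dominated_convergence (fun _ => Cb)
      (fun n => (lip_testFun D _).continuous.measurable.aestronglyMeasurable)
      (integrable_const _) (fun n => Filter.Eventually.of_forall fun x => ?_)
      (Filter.Eventually.of_forall htendF)
    rw [Real.norm_eq_abs]; exact hFb n x
  have hLint : ∀ (ρ : Measure S), IsProbabilityMeasure ρ → Integrable L ρ := fun ρ hρ =>
    integrable_of_bdd hLmeas.aestronglyMeasurable hLb
  have hLf : ∀ (ρ : Measure S), IsProbabilityMeasure ρ →
      |(∫ x, L x ∂ρ) - ∫ x, f x ∂ρ| ≤ ε/3 := by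
    intro ρ hρ
    have hfint : Integrable f ρ := lip_integrable hd hf (D 0) ρ
    have heq : (∫ x, L x ∂ρ) - ∫ x, f x ∂ρ = ∫ x, (L x - f x) ∂ρ :=
      (integral_sub (hLint ρ hρ) hfint).symm
    rw [heq, abs_of_nonneg (integral_nonneg fun x => by have := hc x; simp; linarith)]
    calc ∫ x, (L x - f x) ∂ρ ≤ ∫ _, ε/3 ∂ρ :=
          integral_mono ((hLint ρ hρ).sub hfint) (integrable_const _)
            (fun x => by have := hb x; simp; linarith)
      _ = ε/3 := by simp [hρ.measure_univ]
  have hLL : |(∫ x, L x ∂μ) - ∫ x, L x ∂ν|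
      ≤ ⨆ j : WIdx, |(∫ y, testFun D j y ∂μ) - ∫ y, testFun D j y ∂ν| := by
    refine le_of_tendsto' (((hint μ ‹_›).sub (hint ν ‹_›)).abs) fun n => ?_
    exact le_ciSup hRbdd (⟨n, fun i => q i.1⟩ : WIdx)
  have e1 := hLf μ ‹_›
  have e2 := hLf ν ‹_›
  have habs : |(∫ y, f y ∂μ) - ∫ y, f y ∂ν|
      ≤ |(∫ x, L x ∂μ) - ∫ x, L x ∂ν| + ε/3 + ε/3 := by
    have t1 := abs_sub_le ((∫ y, f y ∂μ)) ((∫ x, L x ∂μ)) ((∫ y, f y ∂ν))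
    have t2 := abs_sub_le ((∫ x, L x ∂μ)) ((∫ x, L x ∂ν)) ((∫ y, f y ∂ν))
    rw [abs_sub_comm (∫ y, f y ∂μ) (∫ x, L x ∂μ)] at t1
    linarith
  linarith

lemma wassDist_eq_iSup (hd : ∀ x y : S, dist x y ≤ 1) {D : ℕ → S} (hD : DenseRange D)
    (μ ν : Measure S) [IsProbabilityMeasure μ] [IsProbabilityMeasure ν] :
    wassDist μ ν = ⨆ j : WIdx, |(∫ y, testFun D j y ∂μ) - ∫ y, testFun D j y ∂ν| := by
  haveI : Nonempty S := ⟨D 0⟩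
  haveI : Nonempty {g : S → ℝ // LipschitzWith 1 g} := ⟨⟨fun _ => 0, LipschitzWith.const' 0⟩⟩
  refine le_antisymm (ciSup_le fun f => abs_le_iSup_testFun hd hD f.2 μ ν)
    (ciSup_le fun j => le_wassDist hd (lip_testFun D j) μ ν)

end TestFun

section Proc
variable {S : Type} [MeasurableSpace S] [MetricSpace S] [BorelSpace S]
  {Ω : Type} [MeasurableSpace Ω] (X : DiscreteMarkovProcess S Ω)

lemma p_prob (t : ℕ) (y : S) : IsProbabilityMeasure (X.p t y) := by
  haveI := X.prob y
  exact Measure.isProbabilityMeasure_map (X.measM t).aemeasurable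

lemma lip_abs_bdd (hd : ∀ x y : S, dist x y ≤ 1) {φ : S → ℝ} (hφ : LipschitzWith 1 φ)
    (x₀ : S) : ∀ z, |φ z| ≤ |φ x₀| + 1 := by
  intro z
  have h := lip_bdd hd hφ x₀ z
  simp only [NNReal.coe_one] at h
  calc |φ z| ≤ |φ x₀| + |φ z - φ x₀| := by
        have := abs_add_le (φ x₀) (φ z - φ x₀); simpa using this
    _ ≤ |φ x₀| + 1 := by linarith

lemma meas_wass (hd : ∀ x y : S, dist x y ≤ 1) {D : ℕ → S} (hD : DenseRange D)
    (π : Measure S) [IsProbabilityMeasure π] (t : ℕ) :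
    Measurable fun y => wassDist (X.p t y) π := by
  have hrw : ∀ y, wassDist (X.p t y) π
      = ⨆ j : WIdx, |(∫ z, testFun D j z ∂(X.p t y)) - ∫ z, testFun D j z ∂π| := fun y => by
    haveI := p_prob X t y
    exact wassDist_eq_iSup hd hD _ _
  simp_rw [hrw]
  refine Measurable.iSup fun j => (Measurable.sub ?_ measurable_const).abs
  have hrw2 : ∀ y, ∫ z, testFun D j z ∂(X.p t y)
      = ∫ ω, testFun D j (X.M t ω) ∂(X.P y) := fun y =>
    integral_map (X.measM t).aemeasurable
      ((lip_testFun D j).continuous.measurable.aestronglyMeasurable)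
  simp_rw [hrw2]
  exact measurable_integral_of_meas X.measP X.prob
    ((lip_testFun D j).continuous.measurable.comp (X.measM t))
    (C := |testFun D j (D 0)| + 1)
    (fun ω => lip_abs_bdd hd (lip_testFun D j) (D 0) (X.M t ω))

lemma wass_bdd (hd : ∀ x y : S, dist x y ≤ 1) [Nonempty S]
    (π : Measure S) [IsProbabilityMeasure π] (t : ℕ) (y : S) :
    |wassDist (X.p t y) π| ≤ 2 := by
  haveI := p_prob X t y
  rw [abs_of_nonneg (wassDist_nonneg hd _ _)]
  exact wassDist_le_two hd _ _

lemma integral_wass_bdd (hd : ∀ x y : S, dist x y ≤ 1) {D : ℕ → S} (hD : DenseRange D)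
    (π : Measure S) [IsProbabilityMeasure π] (t : ℕ) (ρ : Measure S)
    [IsProbabilityMeasure ρ] :
    |∫ y, wassDist (X.p t y) π ∂ρ| ≤ 2 := by
  haveI : Nonempty S := ⟨D 0⟩
  calc |∫ y, wassDist (X.p t y) π ∂ρ| ≤ ∫ y, |wassDist (X.p t y) π| ∂ρ := abs_integral_le'
    _ ≤ ∫ _, (2:ℝ) ∂ρ := integral_mono
        (integrable_of_bdd (meas_wass X hd hD π t).abs.aestronglyMeasurable (C := 2)
          (fun y => by rw [abs_abs]; exact wass_bdd X hd π t y))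
        (integrable_const _) (fun y => wass_bdd X hd π t y)
    _ = 2 := by simp

lemma meas_inner_wass (hd : ∀ x y : S, dist x y ≤ 1) {D : ℕ → S} (hD : DenseRange D)
    (π : Measure S) [IsProbabilityMeasure π] (t m : ℕ) :
    Measurable fun x => ∫ y, wassDist (X.p t y) π ∂(X.p m x) := by
  haveI : Nonempty S := ⟨D 0⟩
  have hrw : ∀ x, ∫ y, wassDist (X.p t y) π ∂(X.p m x)
      = ∫ ω, wassDist (X.p t (X.M m ω)) π ∂(X.P x) := fun x =>
    integral_map (X.measM m).aemeasurable (meas_wass X hd hD π t).aestronglyMeasurable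
  simp_rw [hrw]
  exact measurable_integral_of_meas X.measP X.prob
    ((meas_wass X hd hD π t).comp (X.measM m)) (C := 2)
    (fun ω => wass_bdd X hd π t (X.M m ω))

lemma meas_eps (hd : ∀ x y : S, dist x y ≤ 1) {D : ℕ → S} (hD : DenseRange D)
    (π : Measure S) [IsProbabilityMeasure π] (t : ℕ) :
    Measurable fun x => ⨆ m : ℕ, ∫ y, wassDist (X.p t y) π ∂(X.p m x) :=
  Measurable.iSup fun m => meas_inner_wass X hd hD π t m

lemma eps_bdd (hd : ∀ x y : S, dist x y ≤ 1) {D : ℕ → S} (hD : DenseRange D)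
    (π : Measure S) [IsProbabilityMeasure π] (t : ℕ) (x : S) :
    |⨆ m : ℕ, ∫ y, wassDist (X.p t y) π ∂(X.p m x)| ≤ 2 := by
  haveI : Nonempty S := ⟨D 0⟩
  have hub : ∀ m : ℕ, ∫ y, wassDist (X.p t y) π ∂(X.p m x) ≤ 2 := fun m => by
    haveI := p_prob X m x
    exact le_trans (le_abs_self _) (integral_wass_bdd X hd hD π t _)
  have hbd : BddAbove (Set.range fun m : ℕ => ∫ y, wassDist (X.p t y) π ∂(X.p m x)) :=
    ⟨2, by rintro r ⟨m, rfl⟩; exact hub m⟩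
  refine abs_le.2 ⟨?_, ciSup_le hub⟩
  refine le_trans ?_ (le_ciSup hbd 0)
  haveI := p_prob X 0 x
  have := integral_wass_bdd X hd hD π t (X.p 0 x)
  have := abs_le.1 this
  linarith [this.1]

lemma eps_nonneg (hd : ∀ x y : S, dist x y ≤ 1) [Nonempty S]
    (π : Measure S) [IsProbabilityMeasure π] (t : ℕ) (x : S)
    (hbd : BddAbove (Set.range fun m : ℕ => ∫ y, wassDist (X.p t y) π ∂(X.p m x))) :
    0 ≤ ⨆ m : ℕ, ∫ y, wassDist (X.p t y) π ∂(X.p m x) := by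
  refine le_trans ?_ (le_ciSup hbd 0)
  haveI := p_prob X 0 x
  exact integral_nonneg fun y => by
    haveI := p_prob X t y
    exact wassDist_nonneg hd _ _

end Proc

section Cov

lemma integral_mul_condexp {Ω : Type} {m mΩ : MeasurableSpace Ω} (hm : m ≤ mΩ)
    (μ : Measure Ω) (hpr : IsProbabilityMeasure μ) (φ ψ h' : Ω → ℝ) (C₂ : ℝ)
    (hφm : StronglyMeasurable[m] φ) (hφb : ∀ ω, |φ ω| ≤ C₂)
    (hψint : Integrable ψ μ)
    (hcond : μ[ψ|m] =ᵐ[μ] h') :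
    ∫ ω, φ ω * ψ ω ∂μ = ∫ ω, φ ω * h' ω ∂μ := by
  haveI := hpr
  haveI : SigmaFinite (μ.trim hm) := by
    have : IsFiniteMeasure (μ.trim hm) := isFiniteMeasure_trim hm
    infer_instance
  have hmul : μ[φ * ψ|m] =ᵐ[μ] φ * μ[ψ|m] :=
    condExp_stronglyMeasurable_mul_of_bound hm hφm hψint C₂
      (Filter.Eventually.of_forall fun ω => by rw [Real.norm_eq_abs]; exact hφb ω)
  calc ∫ ω, φ ω * ψ ω ∂μ = ∫ ω, (φ * ψ) ω ∂μ := rfl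
    _ = ∫ ω, (μ[φ * ψ|m]) ω ∂μ := (integral_condExp hm).symm
    _ = ∫ ω, (φ * μ[ψ|m]) ω ∂μ := integral_congr_ae hmul
    _ = ∫ ω, φ ω * h' ω ∂μ := integral_congr_ae (by
          filter_upwards [hcond] with ω hω
          simp only [Pi.mul_apply, hω])

variable {S : Type} [MeasurableSpace S] [MetricSpace S] [BorelSpace S]
  {Ω : Type} [MeasurableSpace Ω] (X : DiscreteMarkovProcess S Ω)

lemma cov_est (hd : ∀ x y : S, dist x y ≤ 1) {D : ℕ → S} (hD : DenseRange D)
    (π : Measure S) [IsProbabilityMeasure π]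
    {f : S → ℝ} {K : NNReal} (hf : LipschitzWith K f) {C : ℝ} (hC : ∀ z, |f z| ≤ C)
    (x : S) (s t : ℕ) :
    |∫ ω, (f (X.M s ω) - (∫ y, f y ∂π)) * (f (X.M (s+t) ω) - (∫ y, f y ∂π)) ∂(X.P x)|
      ≤ (C + |∫ y, f y ∂π|) *
        ((K:ℝ) * (⨆ m : ℕ, ∫ y, wassDist (X.p t y) π ∂(X.p m x))) := by
  haveI : Nonempty S := ⟨D 0⟩
  haveI := X.prob x
  set c : ℝ := ∫ y, f y ∂π with hc
  set C₂ : ℝ := C + |c| with hC₂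
  set g : S → ℝ := fun z => f z - c with hg
  have hgmeas : Measurable g := hf.continuous.measurable.sub measurable_const
  have hgbdd : ∀ z, |g z| ≤ C₂ := fun z => by
    simp only [hg, hC₂]
    calc |f z - c| ≤ |f z| + |c| := abs_sub _ _
      _ ≤ C + |c| := by linarith [hC z]
  have hC₂0 : 0 ≤ C₂ := le_trans (abs_nonneg _) (hgbdd (D 0))
  have hms : (⨆ u : {u : ℕ // u ≤ s},
        MeasurableSpace.comap (X.M u.1) inferInstance) ≤ (inferInstance : MeasurableSpace Ω) :=
    iSup_le fun u => measurable_iff_comap_le.1 (X.measM u.1)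
  set φ : Ω → ℝ := fun ω => g (X.M s ω) with hφ
  set ψ : Ω → ℝ := fun ω => g (X.M (s+t) ω) with hψ
  have hMs : Measurable[⨆ u : {u : ℕ // u ≤ s},
      MeasurableSpace.comap (X.M u.1) inferInstance] (X.M s) :=
    measurable_iff_comap_le.2 (le_iSup
      (fun u : {u : ℕ // u ≤ s} => MeasurableSpace.comap (X.M u.1) inferInstance)
      ⟨s, le_rfl⟩)
  have hφm : StronglyMeasurable[⨆ u : {u : ℕ // u ≤ s},
      MeasurableSpace.comap (X.M u.1) inferInstance] φ :=
    (hgmeas.comp hMs).stronglyMeasurable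
  have hφmeas : Measurable φ := hgmeas.comp (X.measM s)
  have hψmeas : Measurable ψ := hgmeas.comp (X.measM (s+t))
  have hψint : Integrable ψ (X.P x) :=
    integrable_of_bdd hψmeas.aestronglyMeasurable (fun ω => hgbdd _)
  have hmarkov := X.markov x s t g hgmeas ⟨C₂, hgbdd⟩
  set h : S → ℝ := fun y => ∫ z, g z ∂(X.p t y) with hh
  have hhbdd : ∀ y, |h y| ≤ C₂ := fun y => by
    haveI := p_prob X t y
    calc |h y| ≤ ∫ z, |g z| ∂(X.p t y) := abs_integral_le'
      _ ≤ ∫ _, C₂ ∂(X.p t y) := integral_mono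
          (integrable_of_bdd hgmeas.abs.aestronglyMeasurable
            (fun z => by rw [abs_abs]; exact hgbdd z))
          (integrable_const _) (fun z => hgbdd z)
      _ = C₂ := by simp
  have hhmeas : Measurable h := by
    have hrw : ∀ y, h y = ∫ ω, g (X.M t ω) ∂(X.P y) := fun y =>
      integral_map (X.measM t).aemeasurable hgmeas.aestronglyMeasurable
    have he : h = fun y => ∫ ω, g (X.M t ω) ∂(X.P y) := funext hrw
    rw [he]
    exact measurable_integral_of_meas X.measP X.prob (hgmeas.comp (X.measM t))
      (fun ω => hgbdd _)
  have step1 : ∫ ω, φ ω * ψ ω ∂(X.P x) = ∫ ω, φ ω * h (X.M s ω) ∂(X.P x) :=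
    integral_mul_condexp hms (X.P x) (X.prob x) φ ψ (fun ω => h (X.M s ω)) C₂
      hφm (fun ω => hgbdd _) hψint hmarkov
  have step2 : |∫ ω, φ ω * h (X.M s ω) ∂(X.P x)| ≤ C₂ * ∫ ω, |h (X.M s ω)| ∂(X.P x) := by
    have hint1 : Integrable (fun ω => |φ ω * h (X.M s ω)|) (X.P x) :=
      integrable_of_bdd ((hφmeas.mul (hhmeas.comp (X.measM s))).abs.aestronglyMeasurable)
        (C := C₂ * C₂) (fun ω => by
          rw [abs_abs, abs_mul]
          exact mul_le_mul (hgbdd _) (hhbdd _) (abs_nonneg _) hC₂0)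
    have hint2 : Integrable (fun ω => C₂ * |h (X.M s ω)|) (X.P x) :=
      (integrable_of_bdd ((hhmeas.comp (X.measM s)).abs.aestronglyMeasurable)
        (C := C₂) (fun ω => by rw [abs_abs]; exact hhbdd _)).const_mul _
    calc |∫ ω, φ ω * h (X.M s ω) ∂(X.P x)|
        ≤ ∫ ω, |φ ω * h (X.M s ω)| ∂(X.P x) := abs_integral_le'
      _ ≤ ∫ ω, C₂ * |h (X.M s ω)| ∂(X.P x) := integral_mono hint1 hint2 (fun ω => by
          rw [abs_mul]
          exact mul_le_mul_of_nonneg_right (hgbdd _) (abs_nonneg _))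
      _ = C₂ * ∫ ω, |h (X.M s ω)| ∂(X.P x) := integral_const_mul _ _
  have step3 : ∫ ω, |h (X.M s ω)| ∂(X.P x) = ∫ y, |h y| ∂(X.p s x) :=
    (integral_map (X.measM s).aemeasurable hhmeas.abs.aestronglyMeasurable).symm
  have hWmeas := meas_wass X hd hD π t
  have hWbd : ∀ y, |wassDist (X.p t y) π| ≤ 2 := wass_bdd X hd π t
  have hhle : ∀ y, |h y| ≤ (K:ℝ) * wassDist (X.p t y) π := fun y => by
    haveI := p_prob X t y
    have hfint : Integrable f (X.p t y) :=
      integrable_of_bdd hf.continuous.measurable.aestronglyMeasurable hC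
    have : h y = (∫ z, f z ∂(X.p t y)) - c := by
      simp only [hh, hg]
      rw [integral_sub hfint (integrable_const _), integral_const]
      simp [(p_prob X t y).measure_univ]
    rw [this, hc]
    exact abs_integral_sub_le_lip hd hf (X.p t y) π
  have step4 : ∫ y, |h y| ∂(X.p s x)
      ≤ (K:ℝ) * ∫ y, wassDist (X.p t y) π ∂(X.p s x) := by
    haveI := p_prob X s x
    calc ∫ y, |h y| ∂(X.p s x)
        ≤ ∫ y, (K:ℝ) * wassDist (X.p t y) π ∂(X.p s x) := integral_mono
          (integrable_of_bdd hhmeas.abs.aestronglyMeasurable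
            (fun y => by rw [abs_abs]; exact hhbdd y))
          ((integrable_of_bdd hWmeas.aestronglyMeasurable (C := 2) hWbd).const_mul _) hhle
      _ = (K:ℝ) * ∫ y, wassDist (X.p t y) π ∂(X.p s x) := integral_const_mul _ _
  have step5 : ∫ y, wassDist (X.p t y) π ∂(X.p s x)
      ≤ ⨆ m : ℕ, ∫ y, wassDist (X.p t y) π ∂(X.p m x) := by
    refine le_ciSup (f := fun m : ℕ => ∫ y, wassDist (X.p t y) π ∂(X.p m x)) ⟨2, ?_⟩ s
    rintro r ⟨m, rfl⟩
    haveI := p_prob X m x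
    exact le_trans (le_abs_self _) (integral_wass_bdd X hd hD π t _)
  have hWint_nonneg : 0 ≤ ∫ y, wassDist (X.p t y) π ∂(X.p s x) := by
    haveI := p_prob X s x
    exact integral_nonneg fun y => by
      haveI := p_prob X t y
      exact wassDist_nonneg hd _ _
  calc |∫ ω, (f (X.M s ω) - c) * (f (X.M (s+t) ω) - c) ∂(X.P x)|
      = |∫ ω, φ ω * ψ ω ∂(X.P x)| := rfl
    _ = |∫ ω, φ ω * h (X.M s ω) ∂(X.P x)| := by rw [step1]
    _ ≤ C₂ * ∫ ω, |h (X.M s ω)| ∂(X.P x) := step2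
    _ = C₂ * ∫ y, |h y| ∂(X.p s x) := by rw [step3]
    _ ≤ C₂ * ((K:ℝ) * ∫ y, wassDist (X.p t y) π ∂(X.p s x)) :=
        mul_le_mul_of_nonneg_left step4 hC₂0
    _ ≤ C₂ * ((K:ℝ) * (⨆ m : ℕ, ∫ y, wassDist (X.p t y) π ∂(X.p m x))) := by
        refine mul_le_mul_of_nonneg_left (mul_le_mul_of_nonneg_left step5 K.2) hC₂0

end Cov

lemma sum_abs_diff_le {b : ℕ → ℝ} (hb : ∀ t, 0 ≤ b t) {n j : ℕ} (hj : j < n) :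
    ∑ k ∈ Finset.range n, b (max j k - min j k) ≤ 2 * ∑ t ∈ Finset.range n, b t := by
  have hsplit : ∑ k ∈ Finset.range n, b (max j k - min j k)
      = (∑ k ∈ Finset.range (j+1), b (max j k - min j k))
        + ∑ k ∈ Finset.Ico (j+1) n, b (max j k - min j k) := by
    rw [Finset.range_eq_Ico, ← Finset.sum_Ico_consecutive _ (Nat.zero_le (j+1)) hj,
      ← Finset.range_eq_Ico]
  have h1 : ∑ k ∈ Finset.range (j+1), b (max j k - min j k)
      ≤ ∑ t ∈ Finset.range n, b t := by
    have e1 : ∑ k ∈ Finset.range (j+1), b (max j k - min j k)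
        = ∑ k ∈ Finset.range (j+1), b (j - k) := by
      refine Finset.sum_congr rfl fun k hk => ?_
      have hk' : k ≤ j := Nat.lt_succ_iff.1 (Finset.mem_range.1 hk)
      congr 1
      omega
    have e2 : ∑ k ∈ Finset.range (j+1), b (j - k) = ∑ t ∈ Finset.range (j+1), b t := by
      have := Finset.sum_range_reflect (fun t => b t) (j+1)
      simpa using this
    rw [e1, e2]
    exact Finset.sum_le_sum_of_subset_of_nonneg
      (Finset.range_subset_range.2 hj) (fun t _ _ => hb t)
  have h2 : ∑ k ∈ Finset.Ico (j+1) n, b (max j k - min j k)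
      ≤ ∑ t ∈ Finset.range n, b t := by
    have e1 : ∑ k ∈ Finset.Ico (j+1) n, b (max j k - min j k)
        = ∑ k ∈ Finset.Ico (j+1) n, b (k - j) := by
      refine Finset.sum_congr rfl fun k hk => ?_
      have hk' : j + 1 ≤ k := (Finset.mem_Ico.1 hk).1
      congr 1
      omega
    have e2 : ∑ k ∈ Finset.Ico (j+1) n, b (k - j)
        = ∑ i ∈ Finset.range (n - (j+1)), b (i + 1) := by
      rw [Finset.sum_Ico_eq_sum_range]
      refine Finset.sum_congr rfl fun i _ => ?_
      congr 1
      omega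
    have e3 : ∑ i ∈ Finset.range (n - (j+1)), b (i + 1)
        = ∑ t ∈ Finset.Ico 1 (n - (j+1) + 1), b t := by
      rw [Finset.sum_Ico_eq_sum_range]
      refine Finset.sum_congr rfl fun i _ => ?_
      congr 1
      omega
    rw [e1, e2, e3]
    refine Finset.sum_le_sum_of_subset_of_nonneg ?_ (fun t _ _ => hb t)
    intro t ht
    have := Finset.mem_Ico.1 ht
    exact Finset.mem_range.2 (by omega)
  rw [hsplit]
  linarith

/-- If a discrete-time Markov process admits a probability measure `π` with
`lim_n sup_m ∫ d_W(p^n(y,·),π) p^m(x,dy) = 0` for every `x`, then for every `p ≥ 1`, every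
bounded Lipschitz `f` and every initial distribution `μ`, the time averages converge to
`∫ f dπ` in `L^p(Ω, P^μ)`. -/
theorem birkhoff_discrete_Lp
    {S : Type} [MeasurableSpace S] [MetricSpace S] [PolishSpace S] [BorelSpace S]
    (hd : ∀ x y : S, dist x y ≤ 1)
    {Ω : Type} [MeasurableSpace Ω] (X : DiscreteMarkovProcess S Ω)
    (π : Measure S) [IsProbabilityMeasure π]
    (hconv : ∀ x : S, Tendsto
      (fun n : ℕ => ⨆ m : ℕ, ∫ y, wassDist (X.p n y) π ∂(X.p m x)) atTop (𝓝 0))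
    (p : ℝ) (hp : 1 ≤ p)
    (f : S → ℝ) (hfl : ∃ K : NNReal, LipschitzWith K f) (hfb : ∃ C : ℝ, ∀ z : S, |f z| ≤ C)
    (μ : Measure S) [IsProbabilityMeasure μ] :
    Tendsto (fun n : ℕ => ∫ ω, |(n : ℝ)⁻¹ * (∑ k ∈ Finset.range n, f (X.M k ω)) - (∫ y, f y ∂π)| ^ p ∂(μ.bind X.P)) atTop (𝓝 0) := by
  classical
  obtain ⟨K, hK⟩ := hfl
  obtain ⟨C, hC⟩ := hfb
  haveI hSne : Nonempty S := by
    by_contra hS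
    have h := (inferInstance : IsProbabilityMeasure π).measure_univ
    rw [Set.univ_eq_empty_iff.2 (not_nonempty_iff.1 hS)] at h
    simp at h
  set D : ℕ → S := TopologicalSpace.denseSeq S with hDdef
  have hD : DenseRange D := TopologicalSpace.denseRange_denseSeq S
  set c : ℝ := ∫ y, f y ∂π with hc
  set g : S → ℝ := fun z => f z - c with hgdef
  set C₂ : ℝ := C + |c| with hC₂def
  have hgmeas : Measurable g := hK.continuous.measurable.sub measurable_const
  have hgbdd : ∀ z, |g z| ≤ C₂ := fun z => by
    simp only [hgdef, hC₂def]
    calc |f z - c| ≤ |f z| + |c| := abs_sub _ _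
      _ ≤ C + |c| := by linarith [hC z]
  have hC₂0 : 0 ≤ C₂ := le_trans (abs_nonneg _) (hgbdd (Classical.arbitrary S))
  set Q : Measure Ω := μ.bind X.P with hQdef
  haveI hQprob : IsProbabilityMeasure Q := isProbabilityMeasure_bind' X.measP X.prob
  -- the epsilon functions and their integrals
  set eps : ℕ → S → ℝ := fun t x => ⨆ m : ℕ, ∫ y, wassDist (X.p t y) π ∂(X.p m x) with heps
  set b : ℕ → ℝ := fun t => ∫ x, eps t x ∂μ with hbdef
  have hepsmeas : ∀ t, Measurable (eps t) := fun t => meas_eps X hd hD π t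
  have hepsbdd : ∀ t x, |eps t x| ≤ 2 := fun t x => eps_bdd X hd hD π t x
  have hepsnn : ∀ t x, 0 ≤ eps t x := fun t x =>
    eps_nonneg X hd π t x ⟨2, by
      rintro r ⟨m, rfl⟩
      haveI := p_prob X m x
      exact le_trans (le_abs_self _) (integral_wass_bdd X hd hD π t _)⟩
  have hbto : Tendsto b atTop (𝓝 0) := by
    have h0 : (0:ℝ) = ∫ _x, (0:ℝ) ∂μ := by simp
    rw [hbdef, h0]
    exact tendsto_integral_of_dominated_convergence (fun _ => 2)
      (fun t => (hepsmeas t).aestronglyMeasurable) (integrable_const _)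
      (fun t => Filter.Eventually.of_forall fun x => by
        rw [Real.norm_eq_abs]; exact hepsbdd t x)
      (Filter.Eventually.of_forall fun x => hconv x)
  have hbnn : ∀ t, 0 ≤ b t := fun t => integral_nonneg fun x => hepsnn t x
  -- covariance bound under Q
  have hprodmeas : ∀ j k : ℕ, Measurable fun ω => g (X.M j ω) * g (X.M k ω) := fun j k =>
    (hgmeas.comp (X.measM j)).mul (hgmeas.comp (X.measM k))
  have hprodbdd : ∀ (j k : ℕ) (ω : Ω), |g (X.M j ω) * g (X.M k ω)| ≤ C₂ * C₂ := fun j k ω => by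
    rw [abs_mul]
    exact mul_le_mul (hgbdd _) (hgbdd _) (abs_nonneg _) hC₂0
  have hprodint : ∀ j k : ℕ, Integrable (fun ω => g (X.M j ω) * g (X.M k ω)) Q := fun j k =>
    integrable_of_bdd (hprodmeas j k).aestronglyMeasurable (hprodbdd j k)
  have key : ∀ s t : ℕ, |∫ ω, g (X.M s ω) * g (X.M (s+t) ω) ∂Q| ≤ C₂ * ((K:ℝ) * b t) := by
    intro s t
    have hbind : ∫ ω, g (X.M s ω) * g (X.M (s+t) ω) ∂Q
        = ∫ x, ∫ ω, g (X.M s ω) * g (X.M (s+t) ω) ∂(X.P x) ∂μ :=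
      integral_bind_of_bdd X.measP X.prob (hprodmeas s (s+t)) (hprodbdd s (s+t))
    have hin : ∀ x, |∫ ω, g (X.M s ω) * g (X.M (s+t) ω) ∂(X.P x)| ≤ C₂ * ((K:ℝ) * eps t x) :=
      fun x => cov_est X hd hD π hK hC x s t
    have hinmeas : Measurable fun x => ∫ ω, g (X.M s ω) * g (X.M (s+t) ω) ∂(X.P x) :=
      measurable_integral_of_meas X.measP X.prob (hprodmeas s (s+t)) (hprodbdd s (s+t))
    have hinbdd : ∀ x, |∫ ω, g (X.M s ω) * g (X.M (s+t) ω) ∂(X.P x)| ≤ C₂ * C₂ := fun x => by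
      haveI := X.prob x
      calc |∫ ω, g (X.M s ω) * g (X.M (s+t) ω) ∂(X.P x)|
          ≤ ∫ ω, |g (X.M s ω) * g (X.M (s+t) ω)| ∂(X.P x) := abs_integral_le'
        _ ≤ ∫ _, C₂ * C₂ ∂(X.P x) := integral_mono
            (integrable_of_bdd (hprodmeas s (s+t)).abs.aestronglyMeasurable
              (C := C₂ * C₂) (fun ω => by rw [abs_abs]; exact hprodbdd s (s+t) ω))
            (integrable_const _) (hprodbdd s (s+t))
        _ = C₂ * C₂ := by simp
    rw [hbind]
    calc |∫ x, ∫ ω, g (X.M s ω) * g (X.M (s+t) ω) ∂(X.P x) ∂μ|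
        ≤ ∫ x, |∫ ω, g (X.M s ω) * g (X.M (s+t) ω) ∂(X.P x)| ∂μ := abs_integral_le'
      _ ≤ ∫ x, C₂ * ((K:ℝ) * eps t x) ∂μ := integral_mono
          (integrable_of_bdd hinmeas.abs.aestronglyMeasurable (C := C₂ * C₂)
            (fun x => by rw [abs_abs]; exact hinbdd x))
          ((((integrable_of_bdd (hepsmeas t).aestronglyMeasurable
            (hepsbdd t)).const_mul ((K:ℝ))).const_mul C₂)) hin
      _ = C₂ * ((K:ℝ) * b t) := by rw [integral_const_mul, integral_const_mul]
  have hterm : ∀ j k : ℕ, |∫ ω, g (X.M j ω) * g (X.M k ω) ∂Q|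
      ≤ C₂ * ((K:ℝ) * b (max j k - min j k)) := by
    intro j k
    rcases le_total j k with h | h
    · have h2 := key j (k - j)
      have he : j + (k - j) = k := by omega
      rw [he] at h2
      have hmm : max j k - min j k = k - j := by omega
      rw [hmm]
      exact h2
    · have h2 := key k (j - k)
      have he : k + (j - k) = j := by omega
      rw [he] at h2
      have hmm : max j k - min j k = j - k := by omega
      have hcomm : (fun ω => g (X.M j ω) * g (X.M k ω))
          = fun ω => g (X.M k ω) * g (X.M j ω) := funext fun ω => mul_comm _ _
      rw [hmm, hcomm]
      exact h2
  -- the averages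
  set A : ℕ → Ω → ℝ := fun n ω => (n:ℝ)⁻¹ * ∑ k ∈ Finset.range n, g (X.M k ω) with hAdef
  have hAmeas : ∀ n, Measurable (A n) := fun n =>
    (Finset.measurable_sum _ (fun k _ => hgmeas.comp (X.measM k))).const_mul _
  have hSbdd : ∀ (n : ℕ) (ω : Ω), |∑ k ∈ Finset.range n, g (X.M k ω)| ≤ n * C₂ := by
    intro n ω
    calc |∑ k ∈ Finset.range n, g (X.M k ω)| ≤ ∑ k ∈ Finset.range n, |g (X.M k ω)| :=
        Finset.abs_sum_le_sum_abs _ _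
      _ ≤ ∑ _k ∈ Finset.range n, C₂ := Finset.sum_le_sum fun k _ => hgbdd _
      _ = n * C₂ := by simp [Finset.sum_const, nsmul_eq_mul]
  have hAbdd : ∀ (n : ℕ) (ω : Ω), |A n ω| ≤ C₂ := by
    intro n ω
    rcases Nat.eq_zero_or_pos n with rfl | hn
    · simpa [hAdef] using hC₂0
    · have hn' : (0:ℝ) < n := by exact_mod_cast hn
      simp only [hAdef]
      rw [abs_mul, abs_of_nonneg (inv_nonneg.2 (le_of_lt hn'))]
      calc (n:ℝ)⁻¹ * |∑ k ∈ Finset.range n, g (X.M k ω)|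
          ≤ (n:ℝ)⁻¹ * (n * C₂) :=
            mul_le_mul_of_nonneg_left (hSbdd n ω) (inv_nonneg.2 (le_of_lt hn'))
        _ = C₂ := by field_simp
  have hAint : ∀ n, Integrable (A n) Q := fun n =>
    integrable_of_bdd (hAmeas n).aestronglyMeasurable (hAbdd n)
  have hAabsint : ∀ n, Integrable (fun ω => |A n ω|) Q := fun n =>
    integrable_of_bdd (hAmeas n).abs.aestronglyMeasurable
      (fun ω => by rw [abs_abs]; exact hAbdd n ω)
  have hAsqmeas : ∀ n, Measurable (fun ω => (A n ω)^2) := fun n => (hAmeas n).pow_const 2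
  have hAsqbdd : ∀ (n : ℕ) (ω : Ω), |(A n ω)^2| ≤ C₂ * C₂ := fun n ω => by
    rw [abs_of_nonneg (sq_nonneg _), sq, ← abs_mul_abs_self]
    exact mul_le_mul (hAbdd n ω) (hAbdd n ω) (abs_nonneg _) hC₂0
  have hAsqint : ∀ n, Integrable (fun ω => (A n ω)^2) Q := fun n =>
    integrable_of_bdd (hAsqmeas n).aestronglyMeasurable (hAsqbdd n)
  -- the L² estimate
  set T : ℕ → ℝ := fun n => ∫ ω, (A n ω)^2 ∂Q with hTdef
  have hTnn : ∀ n, 0 ≤ T n := fun n => integral_nonneg fun ω => sq_nonneg _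
  have hTle : ∀ n, T n ≤ 2 * (C₂ * (K:ℝ)) * ((n:ℝ)⁻¹ * ∑ t ∈ Finset.range n, b t) := by
    intro n
    rcases Nat.eq_zero_or_pos n with rfl | hn
    · simp [hTdef, hAdef]
    have hn' : (0:ℝ) < n := by exact_mod_cast hn
    have hsum : ∫ ω, (∑ j ∈ Finset.range n, g (X.M j ω))
        * (∑ k ∈ Finset.range n, g (X.M k ω)) ∂Q
        = ∑ j ∈ Finset.range n, ∑ k ∈ Finset.range n,
            ∫ ω, g (X.M j ω) * g (X.M k ω) ∂Q := by
      have hexp : ∀ ω : Ω, (∑ j ∈ Finset.range n, g (X.M j ω))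
          * (∑ k ∈ Finset.range n, g (X.M k ω))
          = ∑ j ∈ Finset.range n, ∑ k ∈ Finset.range n,
              g (X.M j ω) * g (X.M k ω) := fun ω => Finset.sum_mul_sum _ _ _ _
      simp_rw [hexp]
      rw [integral_finset_sum _ (fun j _ =>
        integrable_finset_sum _ (fun k _ => hprodint j k))]
      exact Finset.sum_congr rfl fun j _ =>
        integral_finset_sum _ (fun k _ => hprodint j k)
    have hTeq : T n = ((n:ℝ)⁻¹ * (n:ℝ)⁻¹)
        * ∑ j ∈ Finset.range n, ∑ k ∈ Finset.range n,
            ∫ ω, g (X.M j ω) * g (X.M k ω) ∂Q := by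
      rw [← hsum, hTdef, ← integral_const_mul]
      refine integral_congr_ae (Filter.Eventually.of_forall fun ω => ?_)
      simp only [hAdef]
      ring
    have hsumle : ∑ j ∈ Finset.range n, ∑ k ∈ Finset.range n,
        ∫ ω, g (X.M j ω) * g (X.M k ω) ∂Q
        ≤ (C₂ * (K:ℝ)) * (n * (2 * ∑ t ∈ Finset.range n, b t)) := by
      calc ∑ j ∈ Finset.range n, ∑ k ∈ Finset.range n, ∫ ω, g (X.M j ω) * g (X.M k ω) ∂Q
          ≤ ∑ j ∈ Finset.range n, ∑ k ∈ Finset.range n,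
              (C₂ * (K:ℝ)) * b (max j k - min j k) := by
            refine Finset.sum_le_sum fun j _ => Finset.sum_le_sum fun k _ => ?_
            have := hterm j k
            have h2 := le_trans (le_abs_self _) this
            calc ∫ ω, g (X.M j ω) * g (X.M k ω) ∂Q
                ≤ C₂ * ((K:ℝ) * b (max j k - min j k)) := h2
              _ = (C₂ * (K:ℝ)) * b (max j k - min j k) := by ring
        _ = (C₂ * (K:ℝ)) * ∑ j ∈ Finset.range n,
              ∑ k ∈ Finset.range n, b (max j k - min j k) := by
            rw [Finset.mul_sum]
            exact Finset.sum_congr rfl fun j _ => (Finset.mul_sum _ _ _).symm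
        _ ≤ (C₂ * (K:ℝ)) * ∑ j ∈ Finset.range n, (2 * ∑ t ∈ Finset.range n, b t) := by
            refine mul_le_mul_of_nonneg_left ?_ (mul_nonneg hC₂0 K.2)
            exact Finset.sum_le_sum fun j hj =>
              sum_abs_diff_le hbnn (Finset.mem_range.1 hj)
        _ = (C₂ * (K:ℝ)) * (n * (2 * ∑ t ∈ Finset.range n, b t)) := by
            rw [Finset.sum_const, Finset.card_range, nsmul_eq_mul]
    rw [hTeq]
    have hfactor : ((n:ℝ)⁻¹ * (n:ℝ)⁻¹) * ((C₂ * (K:ℝ)) * (n * (2 * ∑ t ∈ Finset.range n, b t)))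
        = 2 * (C₂ * (K:ℝ)) * ((n:ℝ)⁻¹ * ∑ t ∈ Finset.range n, b t) := by
      field_simp
    calc ((n:ℝ)⁻¹ * (n:ℝ)⁻¹) * ∑ j ∈ Finset.range n, ∑ k ∈ Finset.range n,
          ∫ ω, g (X.M j ω) * g (X.M k ω) ∂Q
        ≤ ((n:ℝ)⁻¹ * (n:ℝ)⁻¹) * ((C₂ * (K:ℝ)) * (n * (2 * ∑ t ∈ Finset.range n, b t))) :=
          mul_le_mul_of_nonneg_left hsumle
            (mul_nonneg (inv_nonneg.2 (le_of_lt hn')) (inv_nonneg.2 (le_of_lt hn')))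
      _ = 2 * (C₂ * (K:ℝ)) * ((n:ℝ)⁻¹ * ∑ t ∈ Finset.range n, b t) := hfactor
  have hcesaro : Tendsto (fun n : ℕ => (n:ℝ)⁻¹ * ∑ t ∈ Finset.range n, b t) atTop (𝓝 0) := by
    have := hbto.cesaro
    simpa [smul_eq_mul] using this
  have hTto : Tendsto T atTop (𝓝 0) := by
    have hub : Tendsto (fun n : ℕ => 2 * (C₂ * (K:ℝ))
        * ((n:ℝ)⁻¹ * ∑ t ∈ Finset.range n, b t)) atTop (𝓝 0) := by
      have := hcesaro.const_mul (2 * (C₂ * (K:ℝ)))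
      simpa using this
    exact tendsto_of_tendsto_of_tendsto_of_le_of_le tendsto_const_nhds hub hTnn hTle
  -- L¹ estimate via Cauchy-Schwarz
  set a : ℕ → ℝ := fun n => ∫ ω, |A n ω| ∂Q with hadef
  have hann : ∀ n, 0 ≤ a n := fun n => integral_nonneg fun ω => abs_nonneg _
  have hCS : ∀ n, (a n)^2 ≤ T n := by
    intro n
    have hexp : ∀ ω : Ω, (|A n ω| - a n)^2
        = (A n ω)^2 - (2 * a n) * |A n ω| + (a n)^2 := fun ω => by
      rw [← sq_abs (A n ω)]
      ring
    have h0 : 0 ≤ ∫ ω, (|A n ω| - a n)^2 ∂Q := integral_nonneg fun ω => sq_nonneg _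
    have heval : ∫ ω, (|A n ω| - a n)^2 ∂Q = T n - (a n)^2 := by
      simp_rw [hexp]
      have hint2 : Integrable (fun ω => (2 * a n) * |A n ω|) Q := (hAabsint n).const_mul _
      have hint1 : Integrable (fun ω => (A n ω)^2 - (2 * a n) * |A n ω|) Q :=
        (hAsqint n).sub hint2
      rw [integral_add hint1 (integrable_const _),
        integral_sub (hAsqint n) hint2, integral_const_mul,
        integral_const]
      simp only [probReal_univ, smul_eq_mul, one_mul]
      rw [hTdef, hadef]
      ring
    rw [heval] at h0
    linarith
  have hasqrt : ∀ n, a n ≤ Real.sqrt (T n) := fun n =>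
    (Real.le_sqrt (hann n) (hTnn n)).mpr (hCS n)
  have hato : Tendsto a atTop (𝓝 0) := by
    have hsq : Tendsto (fun n => Real.sqrt (T n)) atTop (𝓝 0) := by
      have := hTto.sqrt
      simpa [Real.sqrt_zero] using this
    exact tendsto_of_tendsto_of_tendsto_of_le_of_le tendsto_const_nhds hsq hann hasqrt
  -- Lᵖ estimate
  set B : ℝ := C₂ + 1 with hBdef
  have hB1 : 1 ≤ B := by simp only [hBdef]; linarith
  have hB0 : 0 < B := lt_of_lt_of_le one_pos hB1
  have hrp : ∀ n, Integrable (fun ω => |A n ω| ^ p) Q := fun n =>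
    integrable_of_bdd ((hAmeas n).abs.pow_const p).aestronglyMeasurable (C := B ^ p)
      (fun ω => by
        rw [abs_of_nonneg (Real.rpow_nonneg (abs_nonneg _) _)]
        exact Real.rpow_le_rpow (abs_nonneg _)
          (le_trans (hAbdd n ω) (by simp only [hBdef]; linarith)) (by linarith))
  have hple : ∀ n, ∫ ω, |A n ω| ^ p ∂Q ≤ B ^ (p - 1) * a n := by
    intro n
    have hpt : ∀ ω, |A n ω| ^ p ≤ B ^ (p-1) * |A n ω| := by
      intro ω
      have h1 : |A n ω| ^ p = |A n ω| * |A n ω| ^ (p-1) := by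
        rw [show p = 1 + (p-1) by ring, Real.rpow_add' (abs_nonneg _) (by
          rw [show 1 + (p-1) = p by ring]; linarith), Real.rpow_one]
        rw [show 1 + (p-1) = p by ring]
      rw [h1, mul_comm]
      refine mul_le_mul_of_nonneg_right ?_ (abs_nonneg _)
      exact Real.rpow_le_rpow (abs_nonneg _)
        (le_trans (hAbdd n ω) (by simp only [hBdef]; linarith)) (by linarith)
    calc ∫ ω, |A n ω| ^ p ∂Q ≤ ∫ ω, B ^ (p-1) * |A n ω| ∂Q :=
        integral_mono (hrp n) ((hAabsint n).const_mul _) hpt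
      _ = B ^ (p-1) * a n := by rw [integral_const_mul, hadef]
  have hpnn : ∀ n, 0 ≤ ∫ ω, |A n ω| ^ p ∂Q := fun n =>
    integral_nonneg fun ω => Real.rpow_nonneg (abs_nonneg _) _
  have hpto : Tendsto (fun n => ∫ ω, |A n ω| ^ p ∂Q) atTop (𝓝 0) := by
    have hub : Tendsto (fun n => B ^ (p-1) * a n) atTop (𝓝 0) := by
      have := hato.const_mul (B ^ (p-1))
      simpa using this
    exact tendsto_of_tendsto_of_tendsto_of_le_of_le tendsto_const_nhds hub hpnn hple
  -- identify the integrand with |A n|^p for n ≥ 1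
  refine hpto.congr' ?_
  filter_upwards [eventually_ge_atTop 1] with n hn
  have hn' : (n:ℝ) ≠ 0 := by
    have : (0:ℝ) < n := by exact_mod_cast hn
    linarith
  refine integral_congr_ae (Filter.Eventually.of_forall fun ω => ?_)
  congr 1
  congr 1
  simp only [hAdef, hgdef]
  rw [Finset.sum_sub_distrib, Finset.sum_const, Finset.card_range, nsmul_eq_mul, mul_sub]
  rw [← mul_assoc, inv_mul_cancel₀ hn', one_mul]
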